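/- arXiv:1712.09938 — 2 statements merged into one kernel-verified Lean document; each statement's English description precedes it below -/
import Mathlib

section
/- Let $S = \mathbb{C}[X_1,\dots,X_N]$, $\mathfrak{m} = (X_1,\dots,X_N)$, and $d > 0$. Then $\mathfrak{m}^d$ equals the ideal generated by the maximal minors (of size $d$) of the $(d+N-1) \times d$ matrix $M$ whose $(i,j)$ entry is $X_{i-j+1}$ when $1 \leq i-j+1 \leq N$ and $0$ otherwise. -/
open MvPolynomial Finset

/-- The `(d+N-1) × d` matrix whose `(i,j)` entry (0-indexed) is `X_{i-j}` when
`0 ≤ i-j ≤ N-1` and `0` otherwise; its `j`-th column contains `X₁,…,X_N` in rows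
`j` through `j+N-1`. -/
noncomputable def catMatrix (N d : ℕ) :
    Matrix (Fin (d + N - 1)) (Fin d) (MvPolynomial (Fin N) ℂ) :=
  Matrix.of fun i j =>
    if h : (j : ℕ) ≤ (i : ℕ) ∧ (i : ℕ) - (j : ℕ) < N
    then X (⟨(i : ℕ) - (j : ℕ), h.2⟩ : Fin N) else 0

lemma perm_strictMono_eq_one {d : ℕ} (σ : Equiv.Perm (Fin d)) (h : StrictMono σ) : σ = 1 := by
  haveI : WellFoundedLT (Fin d) := Finite.to_wellFoundedLT
  have h2 : StrictMono (σ⁻¹ : Equiv.Perm (Fin d)) := by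
    intro i j hij
    rcases lt_trichotomy ((σ⁻¹ : Equiv.Perm (Fin d)) i) ((σ⁻¹ : Equiv.Perm (Fin d)) j) with h'|h'|h'
    · exact h'
    · exfalso; have := congrArg σ h'; simp at this; omega
    · exfalso; have := h h'; simp at this; omega
  ext i
  have a1 : i ≤ σ i := h.le_apply
  have a2 : i ≤ (σ⁻¹ : Equiv.Perm (Fin d)) i := h2.le_apply
  have := h.monotone a2
  simp only [Equiv.Perm.inv_def, Equiv.apply_symm_apply] at this
  have := le_antisymm this a1
  simp [this]

lemma rearrange {d : ℕ} (R : Fin d → ℕ) (hR : StrictMono R) (σ : Equiv.Perm (Fin d))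
    (hσ : σ ≠ 1) : ∑ i : Fin d, (i : ℤ) * (R (σ i) : ℤ) < ∑ i : Fin d, (i : ℤ) * (R i : ℤ) := by
  have hmon : Monovary (fun i : Fin d => ((i : ℕ) : ℤ)) (fun i => (R i : ℤ)) := by
    intro i j hij
    simp only at hij
    have h1 : R i < R j := by exact_mod_cast hij
    have h2 : i < j := hR.lt_iff_lt.mp h1
    have : (i:ℕ) ≤ (j:ℕ) := h2.le
    show ((i:ℕ):ℤ) ≤ ((j:ℕ):ℤ)
    exact_mod_cast this
  have key := hmon.sum_smul_comp_perm_lt_sum_smul_iff (σ := σ)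
  simp only [smul_eq_mul, Function.comp] at key
  rw [key]
  intro hmon2
  apply hσ
  apply perm_strictMono_eq_one
  intro i j hij
  rcases lt_trichotomy (σ i) (σ j) with h'|h'|h'
  · exact h'
  · exact absurd (congrArg σ.symm h') (by simpa using hij.ne)
  · exfalso
    have hRlt : (R (σ j) : ℤ) < (R (σ i) : ℤ) := by exact_mod_cast hR h'
    have hj : ((j:ℕ):ℤ) ≤ ((i:ℕ):ℤ) := hmon2 hRlt
    have : (j:ℕ) ≤ (i:ℕ) := by exact_mod_cast hj
    omega

lemma key_lemma (N d : ℕ) (hd : 0 < d) : ∀ k : ℕ, ∀ e : Fin d → Fin N,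
    d * (N-1)^2 - (∑ i : Fin d, ((e i : ℕ))^2) ≤ k →
    (∏ i : Fin d, X (e i) : MvPolynomial (Fin N) ℂ) ∈
      Ideal.span {f : MvPolynomial (Fin N) ℂ |
        ∃ r : Fin d → Fin (d + N - 1), StrictMono r ∧
          f = ((catMatrix N d).submatrix r id).det} := by
  intro k
  induction k using Nat.strong_induction_on with
  | _ k IH =>
  intro e hk
  have hN : 0 < N := (e ⟨0, hd⟩).pos
  -- sort e
  set π := Tuple.sort e with hπ
  set e' : Fin d → Fin N := e ∘ π with he'
  have hmono : Monotone e' := Tuple.monotone_sort e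
  have prodeq : (∏ i : Fin d, X (e' i) : MvPolynomial (Fin N) ℂ) = ∏ i : Fin d, X (e i) :=
    Equiv.prod_comp π (fun i => X (e i))
  have sumeq : (∑ i : Fin d, ((e' i : ℕ))^2) = ∑ i : Fin d, ((e i : ℕ))^2 :=
    Equiv.sum_comp π (fun i => ((e i : ℕ))^2)
  rw [← prodeq]
  rw [← sumeq] at hk
  clear prodeq sumeq
  -- the row selection
  have hrbd : ∀ j : Fin d, (e' j : ℕ) + (j : ℕ) < d + N - 1 := by
    intro j
    have h1 := (e' j).isLt
    have h2 := j.isLt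
    omega
  set r : Fin d → Fin (d + N - 1) := fun j => ⟨(e' j : ℕ) + (j : ℕ), hrbd j⟩ with hrdef
  have hr : StrictMono r := by
    intro a b hab
    have h1 : (e' a : ℕ) ≤ (e' b : ℕ) := hmono hab.le
    have h2 : (a : ℕ) < (b : ℕ) := hab
    show ((e' a : ℕ) + (a:ℕ)) < ((e' b : ℕ) + (b:ℕ))
    omega
  have hdet : ((catMatrix N d).submatrix r id).det ∈
      Ideal.span {f : MvPolynomial (Fin N) ℂ |
        ∃ r : Fin d → Fin (d + N - 1), StrictMono r ∧
          f = ((catMatrix N d).submatrix r id).det} :=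
    Ideal.subset_span ⟨r, hr, rfl⟩
  have hB : ∀ i : Fin d, ((catMatrix N d).submatrix r id) i i = X (e' i) := by
    intro i
    simp only [catMatrix, Matrix.submatrix_apply, Matrix.of_apply, id]
    rw [dif_pos ⟨by simp [hrdef], by simp [hrdef, (e' i).isLt]⟩]
    congr 1
    ext
    simp [hrdef]
  have hprod_eq : (∏ i : Fin d, X (e' i) : MvPolynomial (Fin N) ℂ) =
      ((catMatrix N d).submatrix r id).det -
        ∑ σ ∈ univ.erase (1 : Equiv.Perm (Fin d)),
          Equiv.Perm.sign σ • ∏ i, ((catMatrix N d).submatrix r id) (σ i) i := by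
    rw [Matrix.det_apply, ← Finset.add_sum_erase _ _ (mem_univ (1 : Equiv.Perm (Fin d)))]
    simp only [Equiv.Perm.sign_one, one_smul, Equiv.Perm.one_apply, hB]
    ring
  rw [hprod_eq]
  apply Submodule.sub_mem _ hdet
  apply Submodule.sum_mem
  intro σ hσ
  have hσne : σ ≠ 1 := (Finset.mem_erase.mp hσ).1
  rw [Units.smul_def]
  apply zsmul_mem
  by_cases hall : ∀ i : Fin d, ((i : ℕ) ≤ ((r (σ i)) : ℕ) ∧ ((r (σ i)) : ℕ) - (i : ℕ) < N)
  · -- all entries nonzero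
    set c : Fin d → Fin N := fun i => ⟨((r (σ i)) : ℕ) - (i : ℕ), (hall i).2⟩ with hcdef
    have hc : ∀ i : Fin d, ((catMatrix N d).submatrix r id) (σ i) i = X (c i) := by
      intro i
      simp only [catMatrix, Matrix.submatrix_apply, Matrix.of_apply, id]
      rw [dif_pos (hall i)]
    rw [Finset.prod_congr rfl (fun i _ => hc i)]
    -- weight facts
    set Rn : Fin d → ℕ := fun i => (e' i : ℕ) + (i : ℕ) with hRndef
    have hRnmono : StrictMono Rn := by
      intro a b hab
      have h1 : (e' a : ℕ) ≤ (e' b : ℕ) := hmono hab.le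
      have h2 : (a : ℕ) < (b : ℕ) := hab
      simp only [hRndef]
      omega
    have hcval : ∀ i : Fin d, (c i : ℕ) = Rn (σ i) - (i : ℕ) := fun i => rfl
    have hle : ∀ i : Fin d, (i : ℕ) ≤ Rn (σ i) := fun i => (hall i).1
    have h1 : ∀ i : Fin d, (((c i : ℕ) : ℤ))^2 =
        ((Rn (σ i) : ℤ))^2 + ((i : ℕ) : ℤ)^2 - 2*(((i : ℕ) : ℤ) * (Rn (σ i) : ℤ)) := by
      intro i
      have h0 : ((c i : ℕ) : ℤ) = (Rn (σ i) : ℤ) - ((i : ℕ) : ℤ) := by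
        rw [hcval i]
        have := hle i
        omega
      rw [h0]; ring
    have h2 : ∀ i : Fin d, (((e' i : ℕ) : ℤ))^2 =
        ((Rn i : ℤ))^2 + ((i : ℕ) : ℤ)^2 - 2*(((i : ℕ) : ℤ) * (Rn i : ℤ)) := by
      intro i
      have h0 : ((e' i : ℕ) : ℤ) = (Rn i : ℤ) - ((i : ℕ) : ℤ) := by
        simp only [hRndef]
        push_cast
        ring
      rw [h0]; ring
    have hperm : (∑ i : Fin d, ((Rn (σ i) : ℤ))^2) = ∑ i : Fin d, ((Rn i : ℤ))^2 :=
      Equiv.sum_comp σ (fun i => ((Rn i : ℤ))^2)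
    have hrear := rearrange Rn hRnmono σ hσne
    have sum_lt : (∑ i : Fin d, ((e' i : ℕ))^2) < ∑ i : Fin d, ((c i : ℕ))^2 := by
      have zz : (∑ i : Fin d, (((e' i : ℕ) : ℤ))^2) < ∑ i : Fin d, (((c i : ℕ) : ℤ))^2 := by
        rw [Finset.sum_congr rfl (fun i _ => h1 i), Finset.sum_congr rfl (fun i _ => h2 i)]
        rw [Finset.sum_sub_distrib, Finset.sum_sub_distrib, Finset.sum_add_distrib,
          Finset.sum_add_distrib, hperm, ← Finset.mul_sum, ← Finset.mul_sum]
        linarith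
      exact_mod_cast zz
    have hcbd : (∑ i : Fin d, ((c i : ℕ))^2) ≤ d * (N-1)^2 := by
      calc (∑ i : Fin d, ((c i : ℕ))^2) ≤ ∑ _i : Fin d, (N-1)^2 := by
            apply Finset.sum_le_sum
            intro i _
            have := (c i).isLt
            exact Nat.pow_le_pow_left (by omega) 2
        _ = d * (N-1)^2 := by simp [Finset.sum_const, Finset.card_univ, mul_comm]
    exact IH (d * (N-1)^2 - ∑ i : Fin d, ((c i : ℕ))^2) (by omega) c le_rfl
  · push_neg at hall
    obtain ⟨i, hi⟩ := hall
    have hi' : (i:ℕ) ≤ (e' (σ i) : ℕ) + ((σ i : Fin d) : ℕ) →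
        N ≤ (e' (σ i) : ℕ) + ((σ i : Fin d) : ℕ) - (i:ℕ) := hi
    have hthis : ((catMatrix N d).submatrix r id) (σ i) i = 0 := by
      simp only [catMatrix, Matrix.submatrix_apply, Matrix.of_apply, id]
      rw [dif_neg]
      intro h
      have := hi' h.1
      omega
    have hz : (∏ j : Fin d, ((catMatrix N d).submatrix r id) (σ j) j) = 0 :=
      Finset.prod_eq_zero (mem_univ i) hthis
    rw [hz]
    exact Submodule.zero_mem _

lemma pow_eq (N : ℕ) : ∀ d : ℕ,
    (Ideal.span (Set.range (X : Fin N → MvPolynomial (Fin N) ℂ)))^d =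
      Ideal.span {f : MvPolynomial (Fin N) ℂ | ∃ e : Fin d → Fin N, f = ∏ j, X (e j)} := by
  intro d
  induction d with
  | zero =>
    rw [pow_zero, Ideal.one_eq_top]
    symm
    rw [Ideal.eq_top_iff_one]
    exact Ideal.subset_span ⟨fun i => i.elim0, by simp⟩
  | succ n ih =>
    rw [pow_succ, ih, Ideal.span_mul_span']
    congr 1
    ext f
    simp only [Set.mem_mul, Set.mem_setOf_eq, Set.mem_range]
    constructor
    · rintro ⟨g, ⟨e, rfl⟩, x, ⟨i, rfl⟩, rfl⟩
      exact ⟨Fin.snoc e i, by simp [Fin.prod_univ_castSucc]⟩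
    · rintro ⟨e, rfl⟩
      refine ⟨∏ j : Fin n, X (e j.castSucc), ⟨_, rfl⟩, X (e (Fin.last n)), ⟨_, rfl⟩, ?_⟩
      rw [Fin.prod_univ_castSucc]

/-- For `d > 0`, the power `𝔪^d` of the maximal homogeneous ideal
of `ℂ[X₁,…,X_N]` equals the ideal generated by the maximal (`d×d`) minors of the
`(d+N-1) × d` matrix above. -/
theorem stmt_2 (N d : ℕ) (hd : 0 < d) :
    Ideal.span {f : MvPolynomial (Fin N) ℂ |
        ∃ r : Fin d → Fin (d + N - 1), StrictMono r ∧
          f = ((catMatrix N d).submatrix r id).det} =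
      (Ideal.span (Set.range (X : Fin N → MvPolynomial (Fin N) ℂ))) ^ d := by
  apply le_antisymm
  · rw [Ideal.span_le]
    rintro f ⟨r, hr, rfl⟩
    rw [SetLike.mem_coe, Matrix.det_apply]
    apply Submodule.sum_mem
    intro σ _
    rw [Units.smul_def]
    apply zsmul_mem
    have hmem : (∏ i : Fin d, ((catMatrix N d).submatrix r id) (σ i) i) ∈
        ∏ _i : Fin d, (Ideal.span (Set.range (X : Fin N → MvPolynomial (Fin N) ℂ))) := by
      apply Ideal.prod_mem_prod
      intro i _
      simp only [catMatrix, Matrix.submatrix_apply, Matrix.of_apply, id]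
      split
      · exact Ideal.subset_span ⟨_, rfl⟩
      · exact Submodule.zero_mem _
    simpa [Finset.prod_const, Finset.card_univ] using hmem
  · rw [pow_eq, Ideal.span_le]
    rintro f ⟨e, rfl⟩
    exact key_lemma N d hd _ e le_rfl
end

section
/- Let $S = \mathbb{C}[X_{ij}]$ be the coordinate ring on generic $4 \times 4$ matrices, and let $I_3$ be the ideal of $3 \times 3$ minors. Then the inclusions $I_3^3 \subseteq (I_3^3)^{\mathrm{sat}} \subseteq I_3^{(3)}$ are both strict, where $(I_3^3)^{\mathrm{sat}} = I_3^3 : \mathfrak{m}^{\infty}$ is the saturation with respect to the maximal homogeneous ideal and $I_3^{(3)} = I_3^3 : I_2^{\infty}$ is the third symbolic power. -/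
open MvPolynomial

/-- The coordinate ring of generic `4×4` matrices over `ℂ`. -/
noncomputable abbrev S44 : Type := MvPolynomial (Fin 4 × Fin 4) ℂ

/-- The ideal of `p×p` minors of the generic `4×4` matrix. -/
noncomputable def minorsIdeal (p : ℕ) : Ideal S44 :=
  Ideal.span {f : S44 | ∃ r c : Fin p → Fin 4, StrictMono r ∧ StrictMono c ∧
    f = (Matrix.of fun a b : Fin p => X (r a, c b)).det}

/-- The saturation `I : J^∞ = ⋃_r (I : J^r)` of an ideal `I` with respect to `J`. -/
noncomputable def satIdeal (I J : Ideal S44) : Ideal S44 :=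
  ⨆ r : ℕ, Submodule.colon I ((J ^ r : Ideal S44) : Set S44)

/- ## Auxiliary definitions and lemmas -/

noncomputable def x (i j : Fin 4) : S44 := X (i, j)
noncomputable def MX : Matrix (Fin 4) (Fin 4) S44 := Matrix.of fun a b => X (a, b)
noncomputable def Dd : S44 := MX.det
noncomputable def m3 (r c : Fin 3 → Fin 4) : S44 := (Matrix.of fun a b : Fin 3 => X (r a, c b)).det

theorem det_fin_four' {R : Type*} [CommRing R] (M : Matrix (Fin 4) (Fin 4) R) :
    M.det =
      M 0 0 * (M 1 1 * (M 2 2 * M 3 3 - M 2 3 * M 3 2) - M 1 2 * (M 2 1 * M 3 3 - M 2 3 * M 3 1)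
        + M 1 3 * (M 2 1 * M 3 2 - M 2 2 * M 3 1))
      - M 0 1 * (M 1 0 * (M 2 2 * M 3 3 - M 2 3 * M 3 2) - M 1 2 * (M 2 0 * M 3 3 - M 2 3 * M 3 0)
        + M 1 3 * (M 2 0 * M 3 2 - M 2 2 * M 3 0))
      + M 0 2 * (M 1 0 * (M 2 1 * M 3 3 - M 2 3 * M 3 1) - M 1 1 * (M 2 0 * M 3 3 - M 2 3 * M 3 0)
        + M 1 3 * (M 2 0 * M 3 1 - M 2 1 * M 3 0))
      - M 0 3 * (M 1 0 * (M 2 1 * M 3 2 - M 2 2 * M 3 1) - M 1 1 * (M 2 0 * M 3 2 - M 2 2 * M 3 0)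
        + M 1 2 * (M 2 0 * M 3 1 - M 2 1 * M 3 0)) := by
  rw [Matrix.det_succ_row_zero]
  simp [Fin.sum_univ_succ, Matrix.det_fin_three, Matrix.submatrix_apply, Fin.succAbove,
    show (Fin.succ 2 : Fin 4) = 3 from rfl, show (Fin.castSucc 2 : Fin 4) = 2 from rfl]
  ring

lemma Dd_eq : Dd = x 0 0*x 1 1*x 2 2*x 3 3 - x 0 0*x 1 1*x 2 3*x 3 2 - x 0 0*x 1 2*x 2 1*x 3 3 + x 0 0*x 1 2*x 2 3*x 3 1 + x 0 0*x 1 3*x 2 1*x 3 2 - x 0 0*x 1 3*x 2 2*x 3 1 - x 0 1*x 1 0*x 2 2*x 3 3 + x 0 1*x 1 0*x 2 3*x 3 2 + x 0 1*x 1 2*x 2 0*x 3 3 - x 0 1*x 1 2*x 2 3*x 3 0 - x 0 1*x 1 3*x 2 0*x 3 2 + x 0 1*x 1 3*x 2 2*x 3 0 + x 0 2*x 1 0*x 2 1*x 3 3 - x 0 2*x 1 0*x 2 3*x 3 1 - x 0 2*x 1 1*x 2 0*x 3 3 + x 0 2*x 1 1*x 2 3*x 3 0 + x 0 2*x 1 3*x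 2 0*x 3 1 - x 0 2*x 1 3*x 2 1*x 3 0 - x 0 3*x 1 0*x 2 1*x 3 2 + x 0 3*x 1 0*x 2 2*x 3 1 + x 0 3*x 1 1*x 2 0*x 3 2 - x 0 3*x 1 1*x 2 2*x 3 0 - x 0 3*x 1 2*x 2 0*x 3 1 + x 0 3*x 1 2*x 2 1*x 3 0 := by
  rw [Dd, det_fin_four']
  simp only [MX, Matrix.of_apply, x]
  try ring

lemma m3_mem (r c : Fin 3 → Fin 4) (hr : StrictMono r) (hc : StrictMono c) :
    m3 r c ∈ minorsIdeal 3 := Ideal.subset_span ⟨r, c, hr, hc, rfl⟩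

lemma x_mem_I1 (i j : Fin 4) : X (i, j) ∈ minorsIdeal 1 := by
  refine Ideal.subset_span ⟨fun _ => i, fun _ => j, ?_, ?_, ?_⟩
  · exact fun a b h => absurd (Subsingleton.elim a b) (ne_of_lt h)
  · exact fun a b h => absurd (Subsingleton.elim a b) (ne_of_lt h)
  · simp [Matrix.det_fin_one]

/- ### colon helper -/

lemma colon_span {w : S44} {I : Ideal S44} {s : Set S44} (h : ∀ g ∈ s, w * g ∈ I) :
    w ∈ Submodule.colon I (Ideal.span s) := by
  rw [Submodule.mem_colon]
  intro p hp
  induction hp using Submodule.span_induction with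
  | mem g hg => rw [smul_eq_mul]; exact h g hg
  | zero => simp
  | add f g _ _ hf hg => rw [smul_add]; exact add_mem hf hg
  | smul cc f _ hf =>
    rw [smul_eq_mul, smul_eq_mul, show w * (cc * f) = cc * (w * f) from by ring]
    exact Ideal.mul_mem_left _ cc (by rwa [smul_eq_mul] at hf)

/- ### Part A membership: `D² · Xᵢⱼ ∈ I₃³` via the double adjugate -/

lemma adjMX_mem (i j : Fin 4) : MX.adjugate i j ∈ minorsIdeal 3 := by
  rw [Matrix.adjugate_fin_succ_eq_det_submatrix]
  exact Ideal.mul_mem_left _ _ (m3_mem j.succAbove i.succAbove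
    (Fin.strictMono_succAbove j) (Fin.strictMono_succAbove i))

lemma triple_mem {J : Ideal S44} {a b c : S44} (ha : a ∈ J) (hb : b ∈ J) (hc : c ∈ J) :
    a * b * c ∈ J ^ 3 := by
  rw [pow_succ, pow_two]
  exact Ideal.mul_mem_mul (Ideal.mul_mem_mul ha hb) hc

lemma adj_cube {B : Matrix (Fin 4) (Fin 4) S44} {J : Ideal S44} (hB : ∀ i j, B i j ∈ J)
    (i j : Fin 4) : B.adjugate i j ∈ J ^ 3 := by
  rw [Matrix.adjugate_fin_succ_eq_det_submatrix, Matrix.det_fin_three]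
  refine Ideal.mul_mem_left _ _ ?_
  simp only [Matrix.submatrix_apply]
  refine sub_mem (add_mem (add_mem (sub_mem (sub_mem ?_ ?_) ?_) ?_) ?_) ?_ <;>
    exact triple_mem (hB _ _) (hB _ _) (hB _ _)

lemma D2x (i j : Fin 4) : Dd ^ 2 * X (i, j) ∈ minorsIdeal 3 ^ 3 := by
  have h := Matrix.adjugate_adjugate MX (by simp)
  have h2 : MX.adjugate.adjugate i j = Dd ^ 2 * X (i, j) := by
    rw [h]; simp [Matrix.smul_apply, MX, Dd, smul_eq_mul]
  rw [← h2]
  exact adj_cube adjMX_mem i j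

lemma D2_mem_sat : Dd ^ 2 ∈ satIdeal (minorsIdeal 3 ^ 3) (minorsIdeal 1) := by
  rw [satIdeal]
  refine le_iSup (fun r : ℕ => Submodule.colon (minorsIdeal 3 ^ 3) ((minorsIdeal 1 ^ r : Ideal S44) : Set S44)) 1 ?_
  show Dd ^ 2 ∈ Submodule.colon (minorsIdeal 3 ^ 3) ((minorsIdeal 1 ^ 1 : Ideal S44) : Set S44)
  rw [pow_one]
  refine colon_span ?_
  rintro g ⟨r, c, hr, hc, rfl⟩
  have hdet : (Matrix.of fun a b : Fin 1 => (X (r a, c b) : S44)).det = X (r 0, c 0) := by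
    simp [Matrix.det_fin_one]
  rw [hdet]
  exact D2x (r 0) (c 0)

/- ### Part A non-membership: `D² ∉ I₃³` via the diagonal substitution -/

noncomputable def phi0 : S44 →+* Polynomial ℂ :=
  (aeval fun p : Fin 4 × Fin 4 => if p.1 = p.2 then (Polynomial.X : Polynomial ℂ) else 0).toRingHom

lemma phi0_I3 {f : S44} (hf : f ∈ minorsIdeal 3) :
    phi0 f ∈ Ideal.span {(Polynomial.X : Polynomial ℂ) ^ 3} := by
  have hle : Ideal.map phi0 (minorsIdeal 3) ≤ Ideal.span {(Polynomial.X : Polynomial ℂ) ^ 3} := by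
    rw [minorsIdeal, Ideal.map_span, Ideal.span_le]
    rintro g ⟨f, ⟨r, c, hr, hc, rfl⟩, rfl⟩
    simp only [SetLike.mem_coe]
    rw [RingHom.map_det, RingHom.mapMatrix_apply]
    have hm : ((Matrix.of fun a b : Fin 3 => X (r a, c b)).map phi0) =
        (Polynomial.X : Polynomial ℂ) • (Matrix.of fun a b : Fin 3 =>
          if (r a : Fin 4) = c b then (1 : Polynomial ℂ) else 0) := by
      ext a b
      simp [phi0, Matrix.map_apply, apply_ite, mul_ite]
    rw [hm, Matrix.det_smul, Ideal.mem_span_singleton]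
    simpa [Fintype.card_fin] using Dvd.intro _ rfl
  exact hle (Ideal.mem_map_of_mem _ hf)

lemma phi0_D : phi0 Dd = Polynomial.X ^ 4 := by
  rw [Dd, RingHom.map_det, RingHom.mapMatrix_apply]
  have hm : (MX.map phi0) = (Polynomial.X : Polynomial ℂ) • (1 : Matrix (Fin 4) (Fin 4) (Polynomial ℂ)) := by
    ext a b
    simp [phi0, MX, Matrix.map_apply, Matrix.one_apply, apply_ite, mul_ite]
  rw [hm, Matrix.det_smul]
  simp

lemma D2_not_mem : Dd ^ 2 ∉ minorsIdeal 3 ^ 3 := by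
  intro h
  have hmap : phi0 (Dd ^ 2) ∈ Ideal.span {(Polynomial.X : Polynomial ℂ) ^ 9} := by
    have h1 : Ideal.map phi0 (minorsIdeal 3 ^ 3) ≤ Ideal.span {(Polynomial.X : Polynomial ℂ) ^ 9} := by
      rw [Ideal.map_pow]
      calc (Ideal.map phi0 (minorsIdeal 3)) ^ 3
          ≤ (Ideal.span {(Polynomial.X : Polynomial ℂ) ^ 3}) ^ 3 := by
            apply Ideal.pow_right_mono
            rw [Ideal.map_le_iff_le_comap]
            exact fun f hf => phi0_I3 hf
        _ = Ideal.span {(Polynomial.X : Polynomial ℂ) ^ 9} := by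
            rw [Ideal.span_singleton_pow, ← pow_mul]
    exact h1 (Ideal.mem_map_of_mem _ h)
  rw [map_pow, phi0_D, ← pow_mul, Ideal.mem_span_singleton] at hmap
  have := (Polynomial.X_pow_dvd_iff.mp hmap) 8 (by norm_num)
  simp [Polynomial.coeff_X_pow] at this

/- ### Part B membership: Jacobi identities -/

lemma nM012_012_eq : m3 ![0,1,2] ![0,1,2] = x 0 0*x 1 1*x 2 2 - x 0 0*x 1 2*x 2 1 - x 0 1*x 1 0*x 2 2 + x 0 1*x 1 2*x 2 0 + x 0 2*x 1 0*x 2 1 - x 0 2*x 1 1*x 2 0 := by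
  simp only [m3, Matrix.det_fin_three, Matrix.of_apply, Matrix.cons_val_zero, Matrix.cons_val_one, Matrix.head_cons, Matrix.cons_val_two, Matrix.tail_cons, x]
  try ring

lemma nM012_012_mem : m3 ![0,1,2] ![0,1,2] ∈ minorsIdeal 3 :=
  m3_mem _ _ (by decide) (by decide)

lemma nM012_013_eq : m3 ![0,1,2] ![0,1,3] = x 0 0*x 1 1*x 2 3 - x 0 0*x 1 3*x 2 1 - x 0 1*x 1 0*x 2 3 + x 0 1*x 1 3*x 2 0 + x 0 3*x 1 0*x 2 1 - x 0 3*x 1 1*x 2 0 := by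
  simp only [m3, Matrix.det_fin_three, Matrix.of_apply, Matrix.cons_val_zero, Matrix.cons_val_one, Matrix.head_cons, Matrix.cons_val_two, Matrix.tail_cons, x]
  try ring

lemma nM012_013_mem : m3 ![0,1,2] ![0,1,3] ∈ minorsIdeal 3 :=
  m3_mem _ _ (by decide) (by decide)

lemma nM012_023_eq : m3 ![0,1,2] ![0,2,3] = x 0 0*x 1 2*x 2 3 - x 0 0*x 1 3*x 2 2 - x 0 2*x 1 0*x 2 3 + x 0 2*x 1 3*x 2 0 + x 0 3*x 1 0*x 2 2 - x 0 3*x 1 2*x 2 0 := by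
  simp only [m3, Matrix.det_fin_three, Matrix.of_apply, Matrix.cons_val_zero, Matrix.cons_val_one, Matrix.head_cons, Matrix.cons_val_two, Matrix.tail_cons, x]
  try ring

lemma nM012_023_mem : m3 ![0,1,2] ![0,2,3] ∈ minorsIdeal 3 :=
  m3_mem _ _ (by decide) (by decide)

lemma nM012_123_eq : m3 ![0,1,2] ![1,2,3] = x 0 1*x 1 2*x 2 3 - x 0 1*x 1 3*x 2 2 - x 0 2*x 1 1*x 2 3 + x 0 2*x 1 3*x 2 1 + x 0 3*x 1 1*x 2 2 - x 0 3*x 1 2*x 2 1 := by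
  simp only [m3, Matrix.det_fin_three, Matrix.of_apply, Matrix.cons_val_zero, Matrix.cons_val_one, Matrix.head_cons, Matrix.cons_val_two, Matrix.tail_cons, x]
  try ring

lemma nM012_123_mem : m3 ![0,1,2] ![1,2,3] ∈ minorsIdeal 3 :=
  m3_mem _ _ (by decide) (by decide)

lemma nM013_012_eq : m3 ![0,1,3] ![0,1,2] = x 0 0*x 1 1*x 3 2 - x 0 0*x 1 2*x 3 1 - x 0 1*x 1 0*x 3 2 + x 0 1*x 1 2*x 3 0 + x 0 2*x 1 0*x 3 1 - x 0 2*x 1 1*x 3 0 := by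
  simp only [m3, Matrix.det_fin_three, Matrix.of_apply, Matrix.cons_val_zero, Matrix.cons_val_one, Matrix.head_cons, Matrix.cons_val_two, Matrix.tail_cons, x]
  try ring

lemma nM013_012_mem : m3 ![0,1,3] ![0,1,2] ∈ minorsIdeal 3 :=
  m3_mem _ _ (by decide) (by decide)

lemma nM013_013_eq : m3 ![0,1,3] ![0,1,3] = x 0 0*x 1 1*x 3 3 - x 0 0*x 1 3*x 3 1 - x 0 1*x 1 0*x 3 3 + x 0 1*x 1 3*x 3 0 + x 0 3*x 1 0*x 3 1 - x 0 3*x 1 1*x 3 0 := by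
  simp only [m3, Matrix.det_fin_three, Matrix.of_apply, Matrix.cons_val_zero, Matrix.cons_val_one, Matrix.head_cons, Matrix.cons_val_two, Matrix.tail_cons, x]
  try ring

lemma nM013_013_mem : m3 ![0,1,3] ![0,1,3] ∈ minorsIdeal 3 :=
  m3_mem _ _ (by decide) (by decide)

lemma nM013_023_eq : m3 ![0,1,3] ![0,2,3] = x 0 0*x 1 2*x 3 3 - x 0 0*x 1 3*x 3 2 - x 0 2*x 1 0*x 3 3 + x 0 2*x 1 3*x 3 0 + x 0 3*x 1 0*x 3 2 - x 0 3*x 1 2*x 3 0 := by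
  simp only [m3, Matrix.det_fin_three, Matrix.of_apply, Matrix.cons_val_zero, Matrix.cons_val_one, Matrix.head_cons, Matrix.cons_val_two, Matrix.tail_cons, x]
  try ring

lemma nM013_023_mem : m3 ![0,1,3] ![0,2,3] ∈ minorsIdeal 3 :=
  m3_mem _ _ (by decide) (by decide)

lemma nM013_123_eq : m3 ![0,1,3] ![1,2,3] = x 0 1*x 1 2*x 3 3 - x 0 1*x 1 3*x 3 2 - x 0 2*x 1 1*x 3 3 + x 0 2*x 1 3*x 3 1 + x 0 3*x 1 1*x 3 2 - x 0 3*x 1 2*x 3 1 := by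
  simp only [m3, Matrix.det_fin_three, Matrix.of_apply, Matrix.cons_val_zero, Matrix.cons_val_one, Matrix.head_cons, Matrix.cons_val_two, Matrix.tail_cons, x]
  try ring

lemma nM013_123_mem : m3 ![0,1,3] ![1,2,3] ∈ minorsIdeal 3 :=
  m3_mem _ _ (by decide) (by decide)

lemma nM023_012_eq : m3 ![0,2,3] ![0,1,2] = x 0 0*x 2 1*x 3 2 - x 0 0*x 2 2*x 3 1 - x 0 1*x 2 0*x 3 2 + x 0 1*x 2 2*x 3 0 + x 0 2*x 2 0*x 3 1 - x 0 2*x 2 1*x 3 0 := by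
  simp only [m3, Matrix.det_fin_three, Matrix.of_apply, Matrix.cons_val_zero, Matrix.cons_val_one, Matrix.head_cons, Matrix.cons_val_two, Matrix.tail_cons, x]
  try ring

lemma nM023_012_mem : m3 ![0,2,3] ![0,1,2] ∈ minorsIdeal 3 :=
  m3_mem _ _ (by decide) (by decide)

lemma nM023_013_eq : m3 ![0,2,3] ![0,1,3] = x 0 0*x 2 1*x 3 3 - x 0 0*x 2 3*x 3 1 - x 0 1*x 2 0*x 3 3 + x 0 1*x 2 3*x 3 0 + x 0 3*x 2 0*x 3 1 - x 0 3*x 2 1*x 3 0 := by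
  simp only [m3, Matrix.det_fin_three, Matrix.of_apply, Matrix.cons_val_zero, Matrix.cons_val_one, Matrix.head_cons, Matrix.cons_val_two, Matrix.tail_cons, x]
  try ring

lemma nM023_013_mem : m3 ![0,2,3] ![0,1,3] ∈ minorsIdeal 3 :=
  m3_mem _ _ (by decide) (by decide)

lemma nM023_023_eq : m3 ![0,2,3] ![0,2,3] = x 0 0*x 2 2*x 3 3 - x 0 0*x 2 3*x 3 2 - x 0 2*x 2 0*x 3 3 + x 0 2*x 2 3*x 3 0 + x 0 3*x 2 0*x 3 2 - x 0 3*x 2 2*x 3 0 := by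
  simp only [m3, Matrix.det_fin_three, Matrix.of_apply, Matrix.cons_val_zero, Matrix.cons_val_one, Matrix.head_cons, Matrix.cons_val_two, Matrix.tail_cons, x]
  try ring

lemma nM023_023_mem : m3 ![0,2,3] ![0,2,3] ∈ minorsIdeal 3 :=
  m3_mem _ _ (by decide) (by decide)

lemma nM023_123_eq : m3 ![0,2,3] ![1,2,3] = x 0 1*x 2 2*x 3 3 - x 0 1*x 2 3*x 3 2 - x 0 2*x 2 1*x 3 3 + x 0 2*x 2 3*x 3 1 + x 0 3*x 2 1*x 3 2 - x 0 3*x 2 2*x 3 1 := by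
  simp only [m3, Matrix.det_fin_three, Matrix.of_apply, Matrix.cons_val_zero, Matrix.cons_val_one, Matrix.head_cons, Matrix.cons_val_two, Matrix.tail_cons, x]
  try ring

lemma nM023_123_mem : m3 ![0,2,3] ![1,2,3] ∈ minorsIdeal 3 :=
  m3_mem _ _ (by decide) (by decide)

lemma nM123_012_eq : m3 ![1,2,3] ![0,1,2] = x 1 0*x 2 1*x 3 2 - x 1 0*x 2 2*x 3 1 - x 1 1*x 2 0*x 3 2 + x 1 1*x 2 2*x 3 0 + x 1 2*x 2 0*x 3 1 - x 1 2*x 2 1*x 3 0 := by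
  simp only [m3, Matrix.det_fin_three, Matrix.of_apply, Matrix.cons_val_zero, Matrix.cons_val_one, Matrix.head_cons, Matrix.cons_val_two, Matrix.tail_cons, x]
  try ring

lemma nM123_012_mem : m3 ![1,2,3] ![0,1,2] ∈ minorsIdeal 3 :=
  m3_mem _ _ (by decide) (by decide)

lemma nM123_013_eq : m3 ![1,2,3] ![0,1,3] = x 1 0*x 2 1*x 3 3 - x 1 0*x 2 3*x 3 1 - x 1 1*x 2 0*x 3 3 + x 1 1*x 2 3*x 3 0 + x 1 3*x 2 0*x 3 1 - x 1 3*x 2 1*x 3 0 := by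
  simp only [m3, Matrix.det_fin_three, Matrix.of_apply, Matrix.cons_val_zero, Matrix.cons_val_one, Matrix.head_cons, Matrix.cons_val_two, Matrix.tail_cons, x]
  try ring

lemma nM123_013_mem : m3 ![1,2,3] ![0,1,3] ∈ minorsIdeal 3 :=
  m3_mem _ _ (by decide) (by decide)

lemma nM123_023_eq : m3 ![1,2,3] ![0,2,3] = x 1 0*x 2 2*x 3 3 - x 1 0*x 2 3*x 3 2 - x 1 2*x 2 0*x 3 3 + x 1 2*x 2 3*x 3 0 + x 1 3*x 2 0*x 3 2 - x 1 3*x 2 2*x 3 0 := by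
  simp only [m3, Matrix.det_fin_three, Matrix.of_apply, Matrix.cons_val_zero, Matrix.cons_val_one, Matrix.head_cons, Matrix.cons_val_two, Matrix.tail_cons, x]
  try ring

lemma nM123_023_mem : m3 ![1,2,3] ![0,2,3] ∈ minorsIdeal 3 :=
  m3_mem _ _ (by decide) (by decide)

lemma nM123_123_eq : m3 ![1,2,3] ![1,2,3] = x 1 1*x 2 2*x 3 3 - x 1 1*x 2 3*x 3 2 - x 1 2*x 2 1*x 3 3 + x 1 2*x 2 3*x 3 1 + x 1 3*x 2 1*x 3 2 - x 1 3*x 2 2*x 3 1 := by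
  simp only [m3, Matrix.det_fin_three, Matrix.of_apply, Matrix.cons_val_zero, Matrix.cons_val_one, Matrix.head_cons, Matrix.cons_val_two, Matrix.tail_cons, x]
  try ring

lemma nM123_123_mem : m3 ![1,2,3] ![1,2,3] ∈ minorsIdeal 3 :=
  m3_mem _ _ (by decide) (by decide)

lemma jac0101 : Dd * (x 0 0 * x 1 1 - x 0 1 * x 1 0) ∈ minorsIdeal 3 ^ 2 := by
  have e : Dd * (x 0 0 * x 1 1 - x 0 1 * x 1 0) =
      m3 ![0,1,3] ![0,1,3] * m3 ![0,1,2] ![0,1,2]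
      - m3 ![0,1,2] ![0,1,3] * m3 ![0,1,3] ![0,1,2] := by
    rw [Dd_eq, nM012_012_eq, nM012_013_eq, nM013_012_eq, nM013_013_eq]
    try ring
  rw [e, pow_two]
  exact sub_mem (Ideal.mul_mem_mul nM013_013_mem nM012_012_mem)
    (Ideal.mul_mem_mul nM012_013_mem nM013_012_mem)

lemma jac0102 : Dd * (x 0 0 * x 1 2 - x 0 2 * x 1 0) ∈ minorsIdeal 3 ^ 2 := by
  have e : Dd * (x 0 0 * x 1 2 - x 0 2 * x 1 0) =
      m3 ![0,1,3] ![0,2,3] * m3 ![0,1,2] ![0,1,2]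
      - m3 ![0,1,2] ![0,2,3] * m3 ![0,1,3] ![0,1,2] := by
    rw [Dd_eq, nM012_012_eq, nM012_023_eq, nM013_012_eq, nM013_023_eq]
    try ring
  rw [e, pow_two]
  exact sub_mem (Ideal.mul_mem_mul nM013_023_mem nM012_012_mem)
    (Ideal.mul_mem_mul nM012_023_mem nM013_012_mem)

lemma jac0103 : Dd * (x 0 0 * x 1 3 - x 0 3 * x 1 0) ∈ minorsIdeal 3 ^ 2 := by
  have e : Dd * (x 0 0 * x 1 3 - x 0 3 * x 1 0) =
      m3 ![0,1,3] ![0,2,3] * m3 ![0,1,2] ![0,1,3]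
      - m3 ![0,1,2] ![0,2,3] * m3 ![0,1,3] ![0,1,3] := by
    rw [Dd_eq, nM012_013_eq, nM012_023_eq, nM013_013_eq, nM013_023_eq]
    try ring
  rw [e, pow_two]
  exact sub_mem (Ideal.mul_mem_mul nM013_023_mem nM012_013_mem)
    (Ideal.mul_mem_mul nM012_023_mem nM013_013_mem)

lemma jac0112 : Dd * (x 0 1 * x 1 2 - x 0 2 * x 1 1) ∈ minorsIdeal 3 ^ 2 := by
  have e : Dd * (x 0 1 * x 1 2 - x 0 2 * x 1 1) =
      m3 ![0,1,3] ![1,2,3] * m3 ![0,1,2] ![0,1,2]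
      - m3 ![0,1,2] ![1,2,3] * m3 ![0,1,3] ![0,1,2] := by
    rw [Dd_eq, nM012_012_eq, nM012_123_eq, nM013_012_eq, nM013_123_eq]
    try ring
  rw [e, pow_two]
  exact sub_mem (Ideal.mul_mem_mul nM013_123_mem nM012_012_mem)
    (Ideal.mul_mem_mul nM012_123_mem nM013_012_mem)

lemma jac0113 : Dd * (x 0 1 * x 1 3 - x 0 3 * x 1 1) ∈ minorsIdeal 3 ^ 2 := by
  have e : Dd * (x 0 1 * x 1 3 - x 0 3 * x 1 1) =
      m3 ![0,1,3] ![1,2,3] * m3 ![0,1,2] ![0,1,3]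
      - m3 ![0,1,2] ![1,2,3] * m3 ![0,1,3] ![0,1,3] := by
    rw [Dd_eq, nM012_013_eq, nM012_123_eq, nM013_013_eq, nM013_123_eq]
    try ring
  rw [e, pow_two]
  exact sub_mem (Ideal.mul_mem_mul nM013_123_mem nM012_013_mem)
    (Ideal.mul_mem_mul nM012_123_mem nM013_013_mem)

lemma jac0123 : Dd * (x 0 2 * x 1 3 - x 0 3 * x 1 2) ∈ minorsIdeal 3 ^ 2 := by
  have e : Dd * (x 0 2 * x 1 3 - x 0 3 * x 1 2) =
      m3 ![0,1,3] ![1,2,3] * m3 ![0,1,2] ![0,2,3]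
      - m3 ![0,1,2] ![1,2,3] * m3 ![0,1,3] ![0,2,3] := by
    rw [Dd_eq, nM012_023_eq, nM012_123_eq, nM013_023_eq, nM013_123_eq]
    try ring
  rw [e, pow_two]
  exact sub_mem (Ideal.mul_mem_mul nM013_123_mem nM012_023_mem)
    (Ideal.mul_mem_mul nM012_123_mem nM013_023_mem)

lemma jac0201 : Dd * (x 0 0 * x 2 1 - x 0 1 * x 2 0) ∈ minorsIdeal 3 ^ 2 := by
  have e : Dd * (x 0 0 * x 2 1 - x 0 1 * x 2 0) =
      m3 ![0,2,3] ![0,1,3] * m3 ![0,1,2] ![0,1,2]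
      - m3 ![0,1,2] ![0,1,3] * m3 ![0,2,3] ![0,1,2] := by
    rw [Dd_eq, nM012_012_eq, nM012_013_eq, nM023_012_eq, nM023_013_eq]
    try ring
  rw [e, pow_two]
  exact sub_mem (Ideal.mul_mem_mul nM023_013_mem nM012_012_mem)
    (Ideal.mul_mem_mul nM012_013_mem nM023_012_mem)

lemma jac0202 : Dd * (x 0 0 * x 2 2 - x 0 2 * x 2 0) ∈ minorsIdeal 3 ^ 2 := by
  have e : Dd * (x 0 0 * x 2 2 - x 0 2 * x 2 0) =
      m3 ![0,2,3] ![0,2,3] * m3 ![0,1,2] ![0,1,2]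
      - m3 ![0,1,2] ![0,2,3] * m3 ![0,2,3] ![0,1,2] := by
    rw [Dd_eq, nM012_012_eq, nM012_023_eq, nM023_012_eq, nM023_023_eq]
    try ring
  rw [e, pow_two]
  exact sub_mem (Ideal.mul_mem_mul nM023_023_mem nM012_012_mem)
    (Ideal.mul_mem_mul nM012_023_mem nM023_012_mem)

lemma jac0203 : Dd * (x 0 0 * x 2 3 - x 0 3 * x 2 0) ∈ minorsIdeal 3 ^ 2 := by
  have e : Dd * (x 0 0 * x 2 3 - x 0 3 * x 2 0) =
      m3 ![0,2,3] ![0,2,3] * m3 ![0,1,2] ![0,1,3]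
      - m3 ![0,1,2] ![0,2,3] * m3 ![0,2,3] ![0,1,3] := by
    rw [Dd_eq, nM012_013_eq, nM012_023_eq, nM023_013_eq, nM023_023_eq]
    try ring
  rw [e, pow_two]
  exact sub_mem (Ideal.mul_mem_mul nM023_023_mem nM012_013_mem)
    (Ideal.mul_mem_mul nM012_023_mem nM023_013_mem)

lemma jac0212 : Dd * (x 0 1 * x 2 2 - x 0 2 * x 2 1) ∈ minorsIdeal 3 ^ 2 := by
  have e : Dd * (x 0 1 * x 2 2 - x 0 2 * x 2 1) =
      m3 ![0,2,3] ![1,2,3] * m3 ![0,1,2] ![0,1,2]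
      - m3 ![0,1,2] ![1,2,3] * m3 ![0,2,3] ![0,1,2] := by
    rw [Dd_eq, nM012_012_eq, nM012_123_eq, nM023_012_eq, nM023_123_eq]
    try ring
  rw [e, pow_two]
  exact sub_mem (Ideal.mul_mem_mul nM023_123_mem nM012_012_mem)
    (Ideal.mul_mem_mul nM012_123_mem nM023_012_mem)

lemma jac0213 : Dd * (x 0 1 * x 2 3 - x 0 3 * x 2 1) ∈ minorsIdeal 3 ^ 2 := by
  have e : Dd * (x 0 1 * x 2 3 - x 0 3 * x 2 1) =
      m3 ![0,2,3] ![1,2,3] * m3 ![0,1,2] ![0,1,3]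
      - m3 ![0,1,2] ![1,2,3] * m3 ![0,2,3] ![0,1,3] := by
    rw [Dd_eq, nM012_013_eq, nM012_123_eq, nM023_013_eq, nM023_123_eq]
    try ring
  rw [e, pow_two]
  exact sub_mem (Ideal.mul_mem_mul nM023_123_mem nM012_013_mem)
    (Ideal.mul_mem_mul nM012_123_mem nM023_013_mem)

lemma jac0223 : Dd * (x 0 2 * x 2 3 - x 0 3 * x 2 2) ∈ minorsIdeal 3 ^ 2 := by
  have e : Dd * (x 0 2 * x 2 3 - x 0 3 * x 2 2) =
      m3 ![0,2,3] ![1,2,3] * m3 ![0,1,2] ![0,2,3]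
      - m3 ![0,1,2] ![1,2,3] * m3 ![0,2,3] ![0,2,3] := by
    rw [Dd_eq, nM012_023_eq, nM012_123_eq, nM023_023_eq, nM023_123_eq]
    try ring
  rw [e, pow_two]
  exact sub_mem (Ideal.mul_mem_mul nM023_123_mem nM012_023_mem)
    (Ideal.mul_mem_mul nM012_123_mem nM023_023_mem)

lemma jac0301 : Dd * (x 0 0 * x 3 1 - x 0 1 * x 3 0) ∈ minorsIdeal 3 ^ 2 := by
  have e : Dd * (x 0 0 * x 3 1 - x 0 1 * x 3 0) =
      m3 ![0,2,3] ![0,1,3] * m3 ![0,1,3] ![0,1,2]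
      - m3 ![0,1,3] ![0,1,3] * m3 ![0,2,3] ![0,1,2] := by
    rw [Dd_eq, nM013_012_eq, nM013_013_eq, nM023_012_eq, nM023_013_eq]
    try ring
  rw [e, pow_two]
  exact sub_mem (Ideal.mul_mem_mul nM023_013_mem nM013_012_mem)
    (Ideal.mul_mem_mul nM013_013_mem nM023_012_mem)

lemma jac0302 : Dd * (x 0 0 * x 3 2 - x 0 2 * x 3 0) ∈ minorsIdeal 3 ^ 2 := by
  have e : Dd * (x 0 0 * x 3 2 - x 0 2 * x 3 0) =
      m3 ![0,2,3] ![0,2,3] * m3 ![0,1,3] ![0,1,2]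
      - m3 ![0,1,3] ![0,2,3] * m3 ![0,2,3] ![0,1,2] := by
    rw [Dd_eq, nM013_012_eq, nM013_023_eq, nM023_012_eq, nM023_023_eq]
    try ring
  rw [e, pow_two]
  exact sub_mem (Ideal.mul_mem_mul nM023_023_mem nM013_012_mem)
    (Ideal.mul_mem_mul nM013_023_mem nM023_012_mem)

lemma jac0303 : Dd * (x 0 0 * x 3 3 - x 0 3 * x 3 0) ∈ minorsIdeal 3 ^ 2 := by
  have e : Dd * (x 0 0 * x 3 3 - x 0 3 * x 3 0) =
      m3 ![0,2,3] ![0,2,3] * m3 ![0,1,3] ![0,1,3]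
      - m3 ![0,1,3] ![0,2,3] * m3 ![0,2,3] ![0,1,3] := by
    rw [Dd_eq, nM013_013_eq, nM013_023_eq, nM023_013_eq, nM023_023_eq]
    try ring
  rw [e, pow_two]
  exact sub_mem (Ideal.mul_mem_mul nM023_023_mem nM013_013_mem)
    (Ideal.mul_mem_mul nM013_023_mem nM023_013_mem)

lemma jac0312 : Dd * (x 0 1 * x 3 2 - x 0 2 * x 3 1) ∈ minorsIdeal 3 ^ 2 := by
  have e : Dd * (x 0 1 * x 3 2 - x 0 2 * x 3 1) =
      m3 ![0,2,3] ![1,2,3] * m3 ![0,1,3] ![0,1,2]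
      - m3 ![0,1,3] ![1,2,3] * m3 ![0,2,3] ![0,1,2] := by
    rw [Dd_eq, nM013_012_eq, nM013_123_eq, nM023_012_eq, nM023_123_eq]
    try ring
  rw [e, pow_two]
  exact sub_mem (Ideal.mul_mem_mul nM023_123_mem nM013_012_mem)
    (Ideal.mul_mem_mul nM013_123_mem nM023_012_mem)

lemma jac0313 : Dd * (x 0 1 * x 3 3 - x 0 3 * x 3 1) ∈ minorsIdeal 3 ^ 2 := by
  have e : Dd * (x 0 1 * x 3 3 - x 0 3 * x 3 1) =
      m3 ![0,2,3] ![1,2,3] * m3 ![0,1,3] ![0,1,3]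
      - m3 ![0,1,3] ![1,2,3] * m3 ![0,2,3] ![0,1,3] := by
    rw [Dd_eq, nM013_013_eq, nM013_123_eq, nM023_013_eq, nM023_123_eq]
    try ring
  rw [e, pow_two]
  exact sub_mem (Ideal.mul_mem_mul nM023_123_mem nM013_013_mem)
    (Ideal.mul_mem_mul nM013_123_mem nM023_013_mem)

lemma jac0323 : Dd * (x 0 2 * x 3 3 - x 0 3 * x 3 2) ∈ minorsIdeal 3 ^ 2 := by
  have e : Dd * (x 0 2 * x 3 3 - x 0 3 * x 3 2) =
      m3 ![0,2,3] ![1,2,3] * m3 ![0,1,3] ![0,2,3]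
      - m3 ![0,1,3] ![1,2,3] * m3 ![0,2,3] ![0,2,3] := by
    rw [Dd_eq, nM013_023_eq, nM013_123_eq, nM023_023_eq, nM023_123_eq]
    try ring
  rw [e, pow_two]
  exact sub_mem (Ideal.mul_mem_mul nM023_123_mem nM013_023_mem)
    (Ideal.mul_mem_mul nM013_123_mem nM023_023_mem)

lemma jac1201 : Dd * (x 1 0 * x 2 1 - x 1 1 * x 2 0) ∈ minorsIdeal 3 ^ 2 := by
  have e : Dd * (x 1 0 * x 2 1 - x 1 1 * x 2 0) =
      m3 ![1,2,3] ![0,1,3] * m3 ![0,1,2] ![0,1,2]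
      - m3 ![0,1,2] ![0,1,3] * m3 ![1,2,3] ![0,1,2] := by
    rw [Dd_eq, nM012_012_eq, nM012_013_eq, nM123_012_eq, nM123_013_eq]
    try ring
  rw [e, pow_two]
  exact sub_mem (Ideal.mul_mem_mul nM123_013_mem nM012_012_mem)
    (Ideal.mul_mem_mul nM012_013_mem nM123_012_mem)

lemma jac1202 : Dd * (x 1 0 * x 2 2 - x 1 2 * x 2 0) ∈ minorsIdeal 3 ^ 2 := by
  have e : Dd * (x 1 0 * x 2 2 - x 1 2 * x 2 0) =
      m3 ![1,2,3] ![0,2,3] * m3 ![0,1,2] ![0,1,2]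
      - m3 ![0,1,2] ![0,2,3] * m3 ![1,2,3] ![0,1,2] := by
    rw [Dd_eq, nM012_012_eq, nM012_023_eq, nM123_012_eq, nM123_023_eq]
    try ring
  rw [e, pow_two]
  exact sub_mem (Ideal.mul_mem_mul nM123_023_mem nM012_012_mem)
    (Ideal.mul_mem_mul nM012_023_mem nM123_012_mem)

lemma jac1203 : Dd * (x 1 0 * x 2 3 - x 1 3 * x 2 0) ∈ minorsIdeal 3 ^ 2 := by
  have e : Dd * (x 1 0 * x 2 3 - x 1 3 * x 2 0) =
      m3 ![1,2,3] ![0,2,3] * m3 ![0,1,2] ![0,1,3]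
      - m3 ![0,1,2] ![0,2,3] * m3 ![1,2,3] ![0,1,3] := by
    rw [Dd_eq, nM012_013_eq, nM012_023_eq, nM123_013_eq, nM123_023_eq]
    try ring
  rw [e, pow_two]
  exact sub_mem (Ideal.mul_mem_mul nM123_023_mem nM012_013_mem)
    (Ideal.mul_mem_mul nM012_023_mem nM123_013_mem)

lemma jac1212 : Dd * (x 1 1 * x 2 2 - x 1 2 * x 2 1) ∈ minorsIdeal 3 ^ 2 := by
  have e : Dd * (x 1 1 * x 2 2 - x 1 2 * x 2 1) =
      m3 ![1,2,3] ![1,2,3] * m3 ![0,1,2] ![0,1,2]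
      - m3 ![0,1,2] ![1,2,3] * m3 ![1,2,3] ![0,1,2] := by
    rw [Dd_eq, nM012_012_eq, nM012_123_eq, nM123_012_eq, nM123_123_eq]
    try ring
  rw [e, pow_two]
  exact sub_mem (Ideal.mul_mem_mul nM123_123_mem nM012_012_mem)
    (Ideal.mul_mem_mul nM012_123_mem nM123_012_mem)

lemma jac1213 : Dd * (x 1 1 * x 2 3 - x 1 3 * x 2 1) ∈ minorsIdeal 3 ^ 2 := by
  have e : Dd * (x 1 1 * x 2 3 - x 1 3 * x 2 1) =
      m3 ![1,2,3] ![1,2,3] * m3 ![0,1,2] ![0,1,3]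
      - m3 ![0,1,2] ![1,2,3] * m3 ![1,2,3] ![0,1,3] := by
    rw [Dd_eq, nM012_013_eq, nM012_123_eq, nM123_013_eq, nM123_123_eq]
    try ring
  rw [e, pow_two]
  exact sub_mem (Ideal.mul_mem_mul nM123_123_mem nM012_013_mem)
    (Ideal.mul_mem_mul nM012_123_mem nM123_013_mem)

lemma jac1223 : Dd * (x 1 2 * x 2 3 - x 1 3 * x 2 2) ∈ minorsIdeal 3 ^ 2 := by
  have e : Dd * (x 1 2 * x 2 3 - x 1 3 * x 2 2) =
      m3 ![1,2,3] ![1,2,3] * m3 ![0,1,2] ![0,2,3]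
      - m3 ![0,1,2] ![1,2,3] * m3 ![1,2,3] ![0,2,3] := by
    rw [Dd_eq, nM012_023_eq, nM012_123_eq, nM123_023_eq, nM123_123_eq]
    try ring
  rw [e, pow_two]
  exact sub_mem (Ideal.mul_mem_mul nM123_123_mem nM012_023_mem)
    (Ideal.mul_mem_mul nM012_123_mem nM123_023_mem)

lemma jac1301 : Dd * (x 1 0 * x 3 1 - x 1 1 * x 3 0) ∈ minorsIdeal 3 ^ 2 := by
  have e : Dd * (x 1 0 * x 3 1 - x 1 1 * x 3 0) =
      m3 ![1,2,3] ![0,1,3] * m3 ![0,1,3] ![0,1,2]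
      - m3 ![0,1,3] ![0,1,3] * m3 ![1,2,3] ![0,1,2] := by
    rw [Dd_eq, nM013_012_eq, nM013_013_eq, nM123_012_eq, nM123_013_eq]
    try ring
  rw [e, pow_two]
  exact sub_mem (Ideal.mul_mem_mul nM123_013_mem nM013_012_mem)
    (Ideal.mul_mem_mul nM013_013_mem nM123_012_mem)

lemma jac1302 : Dd * (x 1 0 * x 3 2 - x 1 2 * x 3 0) ∈ minorsIdeal 3 ^ 2 := by
  have e : Dd * (x 1 0 * x 3 2 - x 1 2 * x 3 0) =
      m3 ![1,2,3] ![0,2,3] * m3 ![0,1,3] ![0,1,2]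
      - m3 ![0,1,3] ![0,2,3] * m3 ![1,2,3] ![0,1,2] := by
    rw [Dd_eq, nM013_012_eq, nM013_023_eq, nM123_012_eq, nM123_023_eq]
    try ring
  rw [e, pow_two]
  exact sub_mem (Ideal.mul_mem_mul nM123_023_mem nM013_012_mem)
    (Ideal.mul_mem_mul nM013_023_mem nM123_012_mem)

lemma jac1303 : Dd * (x 1 0 * x 3 3 - x 1 3 * x 3 0) ∈ minorsIdeal 3 ^ 2 := by
  have e : Dd * (x 1 0 * x 3 3 - x 1 3 * x 3 0) =
      m3 ![1,2,3] ![0,2,3] * m3 ![0,1,3] ![0,1,3]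
      - m3 ![0,1,3] ![0,2,3] * m3 ![1,2,3] ![0,1,3] := by
    rw [Dd_eq, nM013_013_eq, nM013_023_eq, nM123_013_eq, nM123_023_eq]
    try ring
  rw [e, pow_two]
  exact sub_mem (Ideal.mul_mem_mul nM123_023_mem nM013_013_mem)
    (Ideal.mul_mem_mul nM013_023_mem nM123_013_mem)

lemma jac1312 : Dd * (x 1 1 * x 3 2 - x 1 2 * x 3 1) ∈ minorsIdeal 3 ^ 2 := by
  have e : Dd * (x 1 1 * x 3 2 - x 1 2 * x 3 1) =
      m3 ![1,2,3] ![1,2,3] * m3 ![0,1,3] ![0,1,2]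
      - m3 ![0,1,3] ![1,2,3] * m3 ![1,2,3] ![0,1,2] := by
    rw [Dd_eq, nM013_012_eq, nM013_123_eq, nM123_012_eq, nM123_123_eq]
    try ring
  rw [e, pow_two]
  exact sub_mem (Ideal.mul_mem_mul nM123_123_mem nM013_012_mem)
    (Ideal.mul_mem_mul nM013_123_mem nM123_012_mem)

lemma jac1313 : Dd * (x 1 1 * x 3 3 - x 1 3 * x 3 1) ∈ minorsIdeal 3 ^ 2 := by
  have e : Dd * (x 1 1 * x 3 3 - x 1 3 * x 3 1) =
      m3 ![1,2,3] ![1,2,3] * m3 ![0,1,3] ![0,1,3]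
      - m3 ![0,1,3] ![1,2,3] * m3 ![1,2,3] ![0,1,3] := by
    rw [Dd_eq, nM013_013_eq, nM013_123_eq, nM123_013_eq, nM123_123_eq]
    try ring
  rw [e, pow_two]
  exact sub_mem (Ideal.mul_mem_mul nM123_123_mem nM013_013_mem)
    (Ideal.mul_mem_mul nM013_123_mem nM123_013_mem)

lemma jac1323 : Dd * (x 1 2 * x 3 3 - x 1 3 * x 3 2) ∈ minorsIdeal 3 ^ 2 := by
  have e : Dd * (x 1 2 * x 3 3 - x 1 3 * x 3 2) =
      m3 ![1,2,3] ![1,2,3] * m3 ![0,1,3] ![0,2,3]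
      - m3 ![0,1,3] ![1,2,3] * m3 ![1,2,3] ![0,2,3] := by
    rw [Dd_eq, nM013_023_eq, nM013_123_eq, nM123_023_eq, nM123_123_eq]
    try ring
  rw [e, pow_two]
  exact sub_mem (Ideal.mul_mem_mul nM123_123_mem nM013_023_mem)
    (Ideal.mul_mem_mul nM013_123_mem nM123_023_mem)

lemma jac2301 : Dd * (x 2 0 * x 3 1 - x 2 1 * x 3 0) ∈ minorsIdeal 3 ^ 2 := by
  have e : Dd * (x 2 0 * x 3 1 - x 2 1 * x 3 0) =
      m3 ![1,2,3] ![0,1,3] * m3 ![0,2,3] ![0,1,2]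
      - m3 ![0,2,3] ![0,1,3] * m3 ![1,2,3] ![0,1,2] := by
    rw [Dd_eq, nM023_012_eq, nM023_013_eq, nM123_012_eq, nM123_013_eq]
    try ring
  rw [e, pow_two]
  exact sub_mem (Ideal.mul_mem_mul nM123_013_mem nM023_012_mem)
    (Ideal.mul_mem_mul nM023_013_mem nM123_012_mem)

lemma jac2302 : Dd * (x 2 0 * x 3 2 - x 2 2 * x 3 0) ∈ minorsIdeal 3 ^ 2 := by
  have e : Dd * (x 2 0 * x 3 2 - x 2 2 * x 3 0) =
      m3 ![1,2,3] ![0,2,3] * m3 ![0,2,3] ![0,1,2]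
      - m3 ![0,2,3] ![0,2,3] * m3 ![1,2,3] ![0,1,2] := by
    rw [Dd_eq, nM023_012_eq, nM023_023_eq, nM123_012_eq, nM123_023_eq]
    try ring
  rw [e, pow_two]
  exact sub_mem (Ideal.mul_mem_mul nM123_023_mem nM023_012_mem)
    (Ideal.mul_mem_mul nM023_023_mem nM123_012_mem)

lemma jac2303 : Dd * (x 2 0 * x 3 3 - x 2 3 * x 3 0) ∈ minorsIdeal 3 ^ 2 := by
  have e : Dd * (x 2 0 * x 3 3 - x 2 3 * x 3 0) =
      m3 ![1,2,3] ![0,2,3] * m3 ![0,2,3] ![0,1,3]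
      - m3 ![0,2,3] ![0,2,3] * m3 ![1,2,3] ![0,1,3] := by
    rw [Dd_eq, nM023_013_eq, nM023_023_eq, nM123_013_eq, nM123_023_eq]
    try ring
  rw [e, pow_two]
  exact sub_mem (Ideal.mul_mem_mul nM123_023_mem nM023_013_mem)
    (Ideal.mul_mem_mul nM023_023_mem nM123_013_mem)

lemma jac2312 : Dd * (x 2 1 * x 3 2 - x 2 2 * x 3 1) ∈ minorsIdeal 3 ^ 2 := by
  have e : Dd * (x 2 1 * x 3 2 - x 2 2 * x 3 1) =
      m3 ![1,2,3] ![1,2,3] * m3 ![0,2,3] ![0,1,2]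
      - m3 ![0,2,3] ![1,2,3] * m3 ![1,2,3] ![0,1,2] := by
    rw [Dd_eq, nM023_012_eq, nM023_123_eq, nM123_012_eq, nM123_123_eq]
    try ring
  rw [e, pow_two]
  exact sub_mem (Ideal.mul_mem_mul nM123_123_mem nM023_012_mem)
    (Ideal.mul_mem_mul nM023_123_mem nM123_012_mem)

lemma jac2313 : Dd * (x 2 1 * x 3 3 - x 2 3 * x 3 1) ∈ minorsIdeal 3 ^ 2 := by
  have e : Dd * (x 2 1 * x 3 3 - x 2 3 * x 3 1) =
      m3 ![1,2,3] ![1,2,3] * m3 ![0,2,3] ![0,1,3]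
      - m3 ![0,2,3] ![1,2,3] * m3 ![1,2,3] ![0,1,3] := by
    rw [Dd_eq, nM023_013_eq, nM023_123_eq, nM123_013_eq, nM123_123_eq]
    try ring
  rw [e, pow_two]
  exact sub_mem (Ideal.mul_mem_mul nM123_123_mem nM023_013_mem)
    (Ideal.mul_mem_mul nM023_123_mem nM123_013_mem)

lemma jac2323 : Dd * (x 2 2 * x 3 3 - x 2 3 * x 3 2) ∈ minorsIdeal 3 ^ 2 := by
  have e : Dd * (x 2 2 * x 3 3 - x 2 3 * x 3 2) =
      m3 ![1,2,3] ![1,2,3] * m3 ![0,2,3] ![0,2,3]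
      - m3 ![0,2,3] ![1,2,3] * m3 ![1,2,3] ![0,2,3] := by
    rw [Dd_eq, nM023_023_eq, nM023_123_eq, nM123_023_eq, nM123_123_eq]
    try ring
  rw [e, pow_two]
  exact sub_mem (Ideal.mul_mem_mul nM123_123_mem nM023_023_mem)
    (Ideal.mul_mem_mul nM023_123_mem nM123_023_mem)

set_option maxHeartbeats 4000000 in
lemma jacAll (a b c d : Fin 4) (hab : a < b) (hcd : c < d) :
    Dd * (x a c * x b d - x a d * x b c) ∈ minorsIdeal 3 ^ 2 := by
  fin_cases a <;> fin_cases b <;> fin_cases c <;> fin_cases d <;>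
    simp only [Fin.isValue, Fin.reduceFinMk] <;>
    first
      | exact absurd hab (by decide)
      | exact absurd hcd (by decide)
      | with_reducible exact jac0101
      | with_reducible exact jac0102
      | with_reducible exact jac0103
      | with_reducible exact jac0112
      | with_reducible exact jac0113
      | with_reducible exact jac0123
      | with_reducible exact jac0201
      | with_reducible exact jac0202
      | with_reducible exact jac0203
      | with_reducible exact jac0212
      | with_reducible exact jac0213
      | with_reducible exact jac0223
      | with_reducible exact jac0301
      | with_reducible exact jac0302
      | with_reducible exact jac0303
      | with_reducible exact jac0312
      | with_reducible exact jac0313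
      | with_reducible exact jac0323
      | with_reducible exact jac1201
      | with_reducible exact jac1202
      | with_reducible exact jac1203
      | with_reducible exact jac1212
      | with_reducible exact jac1213
      | with_reducible exact jac1223
      | with_reducible exact jac1301
      | with_reducible exact jac1302
      | with_reducible exact jac1303
      | with_reducible exact jac1312
      | with_reducible exact jac1313
      | with_reducible exact jac1323
      | with_reducible exact jac2301
      | with_reducible exact jac2302
      | with_reducible exact jac2303
      | with_reducible exact jac2312
      | with_reducible exact jac2313
      | with_reducible exact jac2323


lemma DM3_mem_sat :
    Dd * m3 ![0,1,2] ![0,1,2] ∈ satIdeal (minorsIdeal 3 ^ 3) (minorsIdeal 2) := by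
  rw [satIdeal]
  refine le_iSup (fun r : ℕ => Submodule.colon (minorsIdeal 3 ^ 3) ((minorsIdeal 2 ^ r : Ideal S44) : Set S44)) 1 ?_
  show Dd * m3 ![0,1,2] ![0,1,2] ∈ Submodule.colon (minorsIdeal 3 ^ 3) ((minorsIdeal 2 ^ 1 : Ideal S44) : Set S44)
  rw [pow_one]
  refine colon_span ?_
  rintro g ⟨r, c, hr, hc, rfl⟩
  have hdet : (Matrix.of fun a b : Fin 2 => X (r a, c b)).det =
      x (r 0) (c 0) * x (r 1) (c 1) - x (r 0) (c 1) * x (r 1) (c 0) := by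
    rw [Matrix.det_fin_two]
    simp [x]
  rw [hdet]
  have hjac := jacAll (r 0) (r 1) (c 0) (c 1) (hr (by decide)) (hc (by decide))
  have e : Dd * m3 ![0,1,2] ![0,1,2] * (x (r 0) (c 0) * x (r 1) (c 1)
      - x (r 0) (c 1) * x (r 1) (c 0)) =
      Dd * (x (r 0) (c 0) * x (r 1) (c 1) - x (r 0) (c 1) * x (r 1) (c 0))
        * m3 ![0,1,2] ![0,1,2] := by ring
  have hpow : minorsIdeal 3 ^ 3 = minorsIdeal 3 ^ 2 * minorsIdeal 3 := by
    rw [← pow_succ]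
  rw [e, hpow]
  exact Ideal.mul_mem_mul hjac (nM012_012_mem)

/- ### Part B non-membership: rank-one arc -/

noncomputable def gm : Fin 4 → Fin 4 → Polynomial ℂ := ![![2,1,0,2],![0,0,0,0],![3,1,3,0],![1,3,3,1]]

lemma gm00 : gm 0 0 = 2 := rfl
lemma gm01 : gm 0 1 = 1 := rfl
lemma gm02 : gm 0 2 = 0 := rfl
lemma gm03 : gm 0 3 = 2 := rfl
lemma gm10 : gm 1 0 = 0 := rfl
lemma gm11 : gm 1 1 = 0 := rfl
lemma gm12 : gm 1 2 = 0 := rfl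
lemma gm13 : gm 1 3 = 0 := rfl
lemma gm20 : gm 2 0 = 3 := rfl
lemma gm21 : gm 2 1 = 1 := rfl
lemma gm22 : gm 2 2 = 3 := rfl
lemma gm23 : gm 2 3 = 0 := rfl
lemma gm30 : gm 3 0 = 1 := rfl
lemma gm31 : gm 3 1 = 3 := rfl
lemma gm32 : gm 3 2 = 3 := rfl
lemma gm33 : gm 3 3 = 1 := rfl

noncomputable def phi1 : S44 →+* Polynomial ℂ :=
  (aeval fun p : Fin 4 × Fin 4 => 1 + Polynomial.X * gm p.1 p.2).toRingHom

lemma phi1_X (i j : Fin 4) : phi1 (X (i, j)) = 1 + Polynomial.X * gm i j := by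
  simp [phi1]

lemma rank1_det3 {R : Type*} [CommRing R] (t : R) (G : Fin 3 → Fin 3 → R) :
    (Matrix.of fun i j => 1 + t * G i j).det = t ^ 2 *
      (- G 1 2*G 2 1 + G 1 2*G 2 0 + G 1 1*G 2 2 - G 1 1*G 2 0 - G 1 0*G 2 2 + G 1 0*G 2 1
       + G 0 2*G 2 1 - G 0 2*G 2 0 - G 0 2*G 1 1 + G 0 2*G 1 0 - G 0 1*G 2 2 + G 0 1*G 2 0
       + G 0 1*G 1 2 - G 0 1*G 1 0 + G 0 0*G 2 2 - G 0 0*G 2 1 - G 0 0*G 1 2 + G 0 0*G 1 1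
       - t*G 0 2*G 1 1*G 2 0 + t*G 0 2*G 1 0*G 2 1 + t*G 0 1*G 1 2*G 2 0 - t*G 0 1*G 1 0*G 2 2
       - t*G 0 0*G 1 2*G 2 1 + t*G 0 0*G 1 1*G 2 2) := by
  rw [Matrix.det_fin_three]
  simp only [Matrix.of_apply]
  ring

lemma phi1_I3 {f : S44} (hf : f ∈ minorsIdeal 3) :
    phi1 f ∈ Ideal.span {(Polynomial.X : Polynomial ℂ) ^ 2} := by
  have hle : Ideal.map phi1 (minorsIdeal 3) ≤ Ideal.span {(Polynomial.X : Polynomial ℂ) ^ 2} := by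
    rw [minorsIdeal, Ideal.map_span, Ideal.span_le]
    rintro g ⟨f, ⟨r, c, hr, hc, rfl⟩, rfl⟩
    simp only [SetLike.mem_coe]
    rw [RingHom.map_det, RingHom.mapMatrix_apply]
    have hm : ((Matrix.of fun a b : Fin 3 => X (r a, c b)).map phi1) =
        Matrix.of fun a b : Fin 3 => 1 + Polynomial.X * (fun i j => gm (r i) (c j)) a b := by
      ext a b
      simp [phi1_X, Matrix.map_apply]
    rw [hm, rank1_det3, Ideal.mem_span_singleton]
    exact Dvd.intro _ rfl
  exact hle (Ideal.mem_map_of_mem _ hf)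

lemma phi1_D : phi1 Dd = -6 * Polynomial.X ^ 3 := by
  rw [Dd, RingHom.map_det, RingHom.mapMatrix_apply, det_fin_four']
  simp only [Matrix.map_apply, MX, Matrix.of_apply, phi1_X, gm00, gm01, gm02, gm03, gm10, gm11, gm12, gm13, gm20, gm21, gm22, gm23, gm30, gm31, gm32, gm33]
  ring

lemma phi1_m3 : phi1 (m3 ![0,1,2] ![0,1,2]) = 4 * Polynomial.X ^ 2 := by
  rw [m3, RingHom.map_det, RingHom.mapMatrix_apply, Matrix.det_fin_three]
  simp only [Matrix.map_apply, Matrix.of_apply, Matrix.cons_val_zero, Matrix.cons_val_one,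
    Matrix.head_cons, Matrix.cons_val_two, Matrix.tail_cons, phi1_X, gm00, gm01, gm02, gm03, gm10, gm11, gm12, gm13, gm20, gm21, gm22, gm23, gm30, gm31, gm32, gm33]
  ring

lemma phi1_x00 : phi1 (X ((0 : Fin 4), (0 : Fin 4))) = 1 + 2 * Polynomial.X := by
  rw [phi1_X, gm00]
  ring

lemma DM3_not_sat : Dd * m3 ![0,1,2] ![0,1,2] ∉ satIdeal (minorsIdeal 3 ^ 3) (minorsIdeal 1) := by
  intro h
  rw [satIdeal] at h
  have hdir : Directed (· ≤ ·) fun r : ℕ => Submodule.colon (minorsIdeal 3 ^ 3) ((minorsIdeal 1 ^ r : Ideal S44) : Set S44) :=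
    Monotone.directed_le fun i j hij =>
      Submodule.colon_mono le_rfl (SetLike.coe_subset_coe.mpr (Ideal.pow_le_pow_right hij))
  obtain ⟨r, hr⟩ := (Submodule.mem_iSup_of_directed _ hdir).mp h
  have hmem : (Dd * m3 ![0,1,2] ![0,1,2]) * X ((0:Fin 4),(0:Fin 4)) ^ r ∈ minorsIdeal 3 ^ 3 := by
    have := Submodule.mem_colon.mp hr (X ((0:Fin 4),(0:Fin 4)) ^ r)
      (Ideal.pow_mem_pow (x_mem_I1 0 0) r)
    simpa [smul_eq_mul] using this
  have hX6 : phi1 ((Dd * m3 ![0,1,2] ![0,1,2]) * X ((0:Fin 4),(0:Fin 4)) ^ r) ∈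
      Ideal.span {(Polynomial.X : Polynomial ℂ) ^ 6} := by
    have h1 : Ideal.map phi1 (minorsIdeal 3 ^ 3) ≤ Ideal.span {(Polynomial.X : Polynomial ℂ) ^ 6} := by
      rw [Ideal.map_pow]
      calc (Ideal.map phi1 (minorsIdeal 3)) ^ 3
          ≤ (Ideal.span {(Polynomial.X : Polynomial ℂ) ^ 2}) ^ 3 := by
            apply Ideal.pow_right_mono
            rw [Ideal.map_le_iff_le_comap]
            exact fun f hf => phi1_I3 hf
        _ = Ideal.span {(Polynomial.X : Polynomial ℂ) ^ 6} := by
            rw [Ideal.span_singleton_pow, ← pow_mul]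
    exact h1 (Ideal.mem_map_of_mem _ hmem)
  rw [map_mul, map_mul, map_pow, phi1_D, phi1_m3, phi1_x00, Ideal.mem_span_singleton] at hX6
  rw [show (-6 * Polynomial.X ^ 3 * (4 * Polynomial.X ^ 2) * (1 + 2 * Polynomial.X) ^ r : Polynomial ℂ)
      = Polynomial.X ^ 5 * (-24 * (1 + 2 * Polynomial.X) ^ r) from by ring,
    show ((Polynomial.X : Polynomial ℂ) ^ 6) = Polynomial.X ^ 5 * Polynomial.X from by ring] at hX6
  have hdvd : (Polynomial.X : Polynomial ℂ) ∣ -24 * (1 + 2 * Polynomial.X) ^ r :=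
    (mul_dvd_mul_iff_left (pow_ne_zero 5 Polynomial.X_ne_zero)).mp hX6
  have h0 := Polynomial.X_dvd_iff.mp hdvd
  rw [Polynomial.coeff_zero_eq_eval_zero] at h0
  simp at h0

/- ### Inclusions -/

lemma sub1 : minorsIdeal 3 ^ 3 ≤ satIdeal (minorsIdeal 3 ^ 3) (minorsIdeal 1) := by
  rw [satIdeal]
  refine le_trans ?_ (le_iSup (fun r : ℕ => Submodule.colon (minorsIdeal 3 ^ 3) ((minorsIdeal 1 ^ r : Ideal S44) : Set S44)) 0)
  intro f hf
  rw [Submodule.mem_colon]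
  intro p _
  rw [smul_eq_mul]
  exact Ideal.mul_mem_right p _ hf

lemma I2_le_I1 : minorsIdeal 2 ≤ minorsIdeal 1 := by
  rw [minorsIdeal, Ideal.span_le]
  rintro g ⟨r, c, hr, hc, rfl⟩
  simp only [SetLike.mem_coe]
  rw [Matrix.det_fin_two]
  simp only [Matrix.of_apply]
  exact sub_mem (Ideal.mul_mem_right _ _ (x_mem_I1 _ _))
    (Ideal.mul_mem_right _ _ (x_mem_I1 _ _))

lemma sub2 : satIdeal (minorsIdeal 3 ^ 3) (minorsIdeal 1) ≤
    satIdeal (minorsIdeal 3 ^ 3) (minorsIdeal 2) := by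
  rw [satIdeal, satIdeal]
  exact iSup_mono fun r => Submodule.colon_mono le_rfl (SetLike.coe_subset_coe.mpr (Ideal.pow_right_mono I2_le_I1 r))

/-- For the ideal `I₃` of `3×3` minors of a generic `4×4` matrix,
the inclusions `I₃³ ⊆ (I₃³)^{sat} ⊆ I₃^{(3)}` are strict, where
`(I₃³)^{sat} = I₃³ : 𝔪^∞` (`𝔪` the ideal of all variables, i.e. of `1×1` minors)
and `I₃^{(3)} = I₃³ : I₂^∞`. -/
theorem stmt_17 :
    minorsIdeal 3 ^ 3 < satIdeal (minorsIdeal 3 ^ 3) (minorsIdeal 1) ∧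
    satIdeal (minorsIdeal 3 ^ 3) (minorsIdeal 1) <
      satIdeal (minorsIdeal 3 ^ 3) (minorsIdeal 2) := by
  constructor
  · exact lt_of_le_not_ge sub1 (fun h => D2_not_mem (h D2_mem_sat))
  · exact lt_of_le_not_ge sub2 (fun h => DM3_not_sat (h DM3_mem_sat))
end
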